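/- In the lower-bound graph construction, every node in L ∪ T ∪ F or lying on a P-path among the left-side nodes is at distance at most 2P from ℓ_{k+1}; consequently every two nodes on the left side are at distance at most 4P from each other, and every left-side node is at distance at most 4P + 2t + 1 from every right-side node. -/

import Mathlib

/-! The lower-bound graph construction used to prove lower bounds for
`t`-round proof-labeling schemes for the diameter predicate.

The graph has base nodes `ℓ_0, …, ℓ_{k+1}`, `ℓ'_0, …, ℓ'_{k-1}`, `t_h`, `f_h`
(`h < log k`) on the left, and symmetric nodes on the right. Base nodes are
connected by paths (whose interior nodes are fresh): `P`-paths connect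
`ℓ_i–ℓ'_i`, `ℓ_i–ℓ_k`, `ℓ_k–ℓ_{k+1}`, `ℓ_{k+1}–t_h`, `ℓ_{k+1}–f_h`, and `ℓ_i`
to the nodes encoding its binary representation (`t_h` if bit `h` of `i` is 1,
`f_h` otherwise); symmetrically on the right. `(2t+1)`-paths connect `t_h–f'_h`,
`f_h–t'_h` and `ℓ_{k+1}–r_{k+1}`. Finally, the input edge `(ℓ_i, ℓ_{k+1})` is
present iff `S_A[i] = 0`, and `(r_i, r_{k+1})` iff `S_B[i] = 0`. -/

/-- The base (named) nodes of the construction. `L i` is `ℓ_i` for `i < k`,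
`Lk` is `ℓ_k`, `Lk1` is `ℓ_{k+1}`, `L' i` is `ℓ'_i`, `Tl h` is `t_h`,
`Fl h` is `f_h`; similarly on the right. -/
inductive LBBase (k lk : ℕ) : Type
  | L (i : Fin k) | L' (i : Fin k) | Lk | Lk1 | Tl (h : Fin lk) | Fl (h : Fin lk)
  | R (i : Fin k) | R' (i : Fin k) | Rk | Rk1 | Tr (h : Fin lk) | Fr (h : Fin lk)

/-- Names for the connecting paths (and the two families of input edges). -/
inductive LBEdge (k lk : ℕ) : Type
  | ll' (i : Fin k) | llk (i : Fin k) | lklk1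
  | lk1t (h : Fin lk) | lk1f (h : Fin lk) | lenc (i : Fin k) (h : Fin lk)
  | rr' (i : Fin k) | rrk (i : Fin k) | rkrk1
  | rk1t (h : Fin lk) | rk1f (h : Fin lk) | renc (i : Fin k) (h : Fin lk)
  | cr1 (h : Fin lk) | cr2 (h : Fin lk) | crC
  | inA (i : Fin k) | inB (i : Fin k)

namespace LB

variable {k lk : ℕ}

/-- The two endpoints of each connecting path. -/
def ends : LBEdge k lk → LBBase k lk × LBBase k lk
  | .ll' i => (.L i, .L' i)
  | .llk i => (.L i, .Lk)
  | .lklk1 => (.Lk, .Lk1)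
  | .lk1t h => (.Lk1, .Tl h)
  | .lk1f h => (.Lk1, .Fl h)
  | .lenc i h => (.L i, if Nat.testBit i.val h.val then .Tl h else .Fl h)
  | .rr' i => (.R i, .R' i)
  | .rrk i => (.R i, .Rk)
  | .rkrk1 => (.Rk, .Rk1)
  | .rk1t h => (.Rk1, .Tr h)
  | .rk1f h => (.Rk1, .Fr h)
  | .renc i h => (.R i, if Nat.testBit i.val h.val then .Tr h else .Fr h)
  | .cr1 h => (.Tl h, .Fr h)
  | .cr2 h => (.Fl h, .Tr h)
  | .crC => (.Lk1, .Rk1)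
  | .inA i => (.L i, .Lk1)
  | .inB i => (.R i, .Rk1)

/-- The number of edges of each connecting path: `2t+1` for the three
cross families, `1` for the input edges, and `P` for all others. -/
def elen (P t : ℕ) : LBEdge k lk → ℕ
  | .cr1 _ => 2 * t + 1
  | .cr2 _ => 2 * t + 1
  | .crC => 2 * t + 1
  | .inA _ => 1
  | .inB _ => 1
  | _ => P

/-- Which connecting paths are present: all of them, except that the input edge
`(ℓ_i, ℓ_{k+1})` is present iff `S_A[i] = 0`, and `(r_i, r_{k+1})` iff `S_B[i] = 0`. -/
def active (SA SB : Fin k → Bool) : LBEdge k lk → Prop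
  | .inA i => SA i = false
  | .inB i => SB i = false
  | _ => True

/-- The vertices of the lower-bound graph: base nodes, plus the interior
nodes of the connecting paths (a path with `m` edges has `m - 1` interior
nodes, numbered consecutively from its first endpoint). -/
def Vtx (k lk P t : ℕ) : Type :=
  LBBase k lk ⊕ (Σ e : LBEdge k lk, Fin (elen P t e - 1))

/-- One direction of the adjacency relation of the lower-bound graph. -/
def Rel (k lk P t : ℕ) (SA SB : Fin k → Bool) : Vtx k lk P t → Vtx k lk P t → Prop :=
  fun x y =>
    (∃ e : LBEdge k lk, active SA SB e ∧ elen P t e = 1 ∧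
        x = Sum.inl (ends e).1 ∧ y = Sum.inl (ends e).2) ∨
    (∃ (e : LBEdge k lk) (j : Fin (elen P t e - 1)), active SA SB e ∧
        x = Sum.inl (ends e).1 ∧ y = Sum.inr ⟨e, j⟩ ∧ j.val = 0) ∨
    (∃ (e : LBEdge k lk) (j : Fin (elen P t e - 1)), active SA SB e ∧
        x = Sum.inr ⟨e, j⟩ ∧ y = Sum.inl (ends e).2 ∧ j.val + 2 = elen P t e) ∨
    (∃ (e : LBEdge k lk) (j j' : Fin (elen P t e - 1)), active SA SB e ∧
        x = Sum.inr ⟨e, j⟩ ∧ y = Sum.inr ⟨e, j'⟩ ∧ j'.val = j.val + 1)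

/-- The lower-bound graph. -/
def graph (k lk P t : ℕ) (SA SB : Fin k → Bool) : SimpleGraph (Vtx k lk P t) :=
  SimpleGraph.fromRel (Rel k lk P t SA SB)

end LB

namespace LB

/-- The left-side core nodes: `L ∪ T ∪ F` (together with `ℓ_k`, `ℓ_{k+1}`) and
the interior nodes of the `P`-paths connecting these left-side nodes. -/
def leftCore {k lk P t : ℕ} : Vtx k lk P t → Prop
  | Sum.inl (LBBase.L _) => True
  | Sum.inl LBBase.Lk => True
  | Sum.inl LBBase.Lk1 => True
  | Sum.inl (LBBase.Tl _) => True
  | Sum.inl (LBBase.Fl _) => True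
  | Sum.inr ⟨LBEdge.llk _, _⟩ => True
  | Sum.inr ⟨LBEdge.lklk1, _⟩ => True
  | Sum.inr ⟨LBEdge.lk1t _, _⟩ => True
  | Sum.inr ⟨LBEdge.lk1f _, _⟩ => True
  | Sum.inr ⟨LBEdge.lenc _ _, _⟩ => True
  | _ => False

/-- The right-side core nodes, symmetrically. -/
def rightCore {k lk P t : ℕ} : Vtx k lk P t → Prop
  | Sum.inl (LBBase.R _) => True
  | Sum.inl LBBase.Rk => True
  | Sum.inl LBBase.Rk1 => True
  | Sum.inl (LBBase.Tr _) => True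
  | Sum.inl (LBBase.Fr _) => True
  | Sum.inr ⟨LBEdge.rrk _, _⟩ => True
  | Sum.inr ⟨LBEdge.rkrk1, _⟩ => True
  | Sum.inr ⟨LBEdge.rk1t _, _⟩ => True
  | Sum.inr ⟨LBEdge.rk1f _, _⟩ => True
  | Sum.inr ⟨LBEdge.renc _ _, _⟩ => True
  | _ => False

end LB

attribute [reducible] LB.Vtx
attribute [reducible] LB.ends

namespace LB

open SimpleGraph

variable {k lk P t : ℕ} {SA SB : Fin k → Bool}

lemma adj_start (e : LBEdge k lk) (he : active SA SB e)
    (j : Fin (elen P t e - 1)) (hj : j.val = 0) :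
    (graph k lk P t SA SB).Adj (Sum.inl (ends e).1) (Sum.inr ⟨e, j⟩) := by
  rw [graph, SimpleGraph.fromRel_adj]
  exact ⟨by simp, Or.inl (Or.inr (Or.inl ⟨e, j, he, rfl, rfl, hj⟩))⟩

lemma adj_step (e : LBEdge k lk) (he : active SA SB e)
    (j j' : Fin (elen P t e - 1)) (hj : j'.val = j.val + 1) :
    (graph k lk P t SA SB).Adj (Sum.inr ⟨e, j⟩) (Sum.inr ⟨e, j'⟩) := by
  rw [graph, SimpleGraph.fromRel_adj]
  refine ⟨?_, Or.inl (Or.inr (Or.inr (Or.inr ⟨e, j, j', he, rfl, rfl, hj⟩)))⟩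
  intro h
  have : j = j' := by
    have := Sum.inr_injective h
    exact (Sigma.mk.inj_iff.mp this).2.eq
  omega

lemma adj_end (e : LBEdge k lk) (he : active SA SB e)
    (j : Fin (elen P t e - 1)) (hj : j.val + 2 = elen P t e) :
    (graph k lk P t SA SB).Adj (Sum.inr ⟨e, j⟩) (Sum.inl (ends e).2) := by
  rw [graph, SimpleGraph.fromRel_adj]
  exact ⟨by simp, Or.inl (Or.inr (Or.inr (Or.inl ⟨e, j, he, rfl, rfl, hj⟩)))⟩

lemma adj_ends (e : LBEdge k lk) (he : active SA SB e)
    (h1 : elen P t e = 1) (hne : (ends e).1 ≠ (ends e).2) :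
    (graph k lk P t SA SB).Adj (Sum.inl (ends e).1) (Sum.inl (ends e).2) := by
  rw [graph, SimpleGraph.fromRel_adj]
  exact ⟨fun h => hne (Sum.inl_injective h), Or.inl (Or.inl ⟨e, he, h1, rfl, rfl⟩)⟩

lemma walk_from_start (e : LBEdge k lk) (he : active SA SB e) :
    ∀ (n : ℕ) (j : Fin (elen P t e - 1)), j.val = n →
      ∃ p : (graph k lk P t SA SB).Walk (Sum.inl (ends e).1) (Sum.inr ⟨e, j⟩),
        p.length = n + 1 := by
  intro n
  induction n with
  | zero =>
    intro j hj
    exact ⟨(adj_start e he j hj).toWalk, rfl⟩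
  | succ n ih =>
    intro j hj
    have hn : n < elen P t e - 1 := by have := j.isLt; omega
    obtain ⟨p, hp⟩ := ih ⟨n, hn⟩ rfl
    exact ⟨p.concat (adj_step e he ⟨n, hn⟩ j (by simp [hj])),
      by simp [SimpleGraph.Walk.length_concat, hp]⟩

lemma walk_to_end (e : LBEdge k lk) (he : active SA SB e) :
    ∀ (n : ℕ) (j : Fin (elen P t e - 1)), elen P t e - 1 - j.val = n →
      ∃ p : (graph k lk P t SA SB).Walk (Sum.inr ⟨e, j⟩) (Sum.inl (ends e).2),
        p.length = n := by
  intro n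
  induction n with
  | zero =>
    intro j hj
    exact absurd j.isLt (by omega)
  | succ n ih =>
    intro j hj
    rcases Nat.eq_zero_or_pos n with h0 | h0
    · subst h0
      have h2 : j.val + 2 = elen P t e := by have := j.isLt; omega
      exact ⟨(adj_end e he j h2).toWalk, rfl⟩
    · have hj' : j.val + 1 < elen P t e - 1 := by have := j.isLt; omega
      obtain ⟨p, hp⟩ := ih ⟨j.val + 1, hj'⟩ (by simp; omega)
      exact ⟨SimpleGraph.Walk.cons (adj_step e he j ⟨j.val + 1, hj'⟩ rfl) p,
        by simp [hp]⟩

lemma walk_ends (e : LBEdge k lk) (he : active SA SB e)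
    (h1 : 1 ≤ elen P t e) (hne : (ends e).1 ≠ (ends e).2) :
    ∃ p : (graph k lk P t SA SB).Walk (Sum.inl (ends e).1) (Sum.inl (ends e).2),
      p.length = elen P t e := by
  rcases Nat.lt_or_ge (elen P t e) 2 with h | h
  · have he1 : elen P t e = 1 := by omega
    exact ⟨(adj_ends e he he1 hne).toWalk, by simp [he1]⟩
  · have h0 : (0 : ℕ) < elen P t e - 1 := by omega
    obtain ⟨p1, hp1⟩ := walk_from_start e he 0 ⟨0, h0⟩ rfl
    obtain ⟨p2, hp2⟩ := walk_to_end e he (elen P t e - 1) ⟨0, h0⟩ (by simp)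
    exact ⟨p1.append p2, by simp [hp1, hp2]; omega⟩

variable (SA SB) in
lemma walk_to_Lk1 (hP : 1 ≤ P) (x : Vtx k lk P t) (hx : leftCore x) :
    ∃ p : (graph k lk P t SA SB).Walk x (Sum.inl LBBase.Lk1), p.length ≤ 2 * P := by
  have hlk : ∃ q : (graph k lk P t SA SB).Walk (Sum.inl (LBBase.Lk : LBBase k lk))
      (Sum.inl LBBase.Lk1), q.length = P := by
    obtain ⟨q, hq⟩ := walk_ends (SA := SA) (SB := SB) (.lklk1 : LBEdge k lk)
      trivial (by simpa [elen] using hP) (by simp [ends])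
    exact ⟨q, hq⟩
  have hTl : ∀ h : Fin lk, ∃ q : (graph k lk P t SA SB).Walk
      (Sum.inl (LBBase.Tl h)) (Sum.inl LBBase.Lk1), q.length = P := by
    intro h
    obtain ⟨q, hq⟩ := walk_ends (SA := SA) (SB := SB) (.lk1t h)
      trivial (by simpa [elen] using hP) (by simp [ends])
    exact ⟨q.reverse, by simp only [SimpleGraph.Walk.length_reverse, hq]; simp only [elen]⟩
  have hFl : ∀ h : Fin lk, ∃ q : (graph k lk P t SA SB).Walk
      (Sum.inl (LBBase.Fl h)) (Sum.inl LBBase.Lk1), q.length = P := by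
    intro h
    obtain ⟨q, hq⟩ := walk_ends (SA := SA) (SB := SB) (.lk1f h)
      trivial (by simpa [elen] using hP) (by simp [ends])
    exact ⟨q.reverse, by simp only [SimpleGraph.Walk.length_reverse, hq]; simp only [elen]⟩
  match x, hx with
  | Sum.inl (LBBase.L i), _ =>
    obtain ⟨p1, hp1⟩ := walk_ends (SA := SA) (SB := SB) (.llk i)
      trivial (by simpa [elen] using hP) (by simp [ends])
    obtain ⟨p2, hp2⟩ := hlk
    exact ⟨p1.append p2, by simp only [SimpleGraph.Walk.length_append, hp1, hp2]; simp only [elen]; omega⟩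
  | Sum.inl LBBase.Lk, _ =>
    obtain ⟨p, hp⟩ := hlk
    exact ⟨p, by omega⟩
  | Sum.inl LBBase.Lk1, _ => exact ⟨SimpleGraph.Walk.nil, by simp⟩
  | Sum.inl (LBBase.Tl h), _ =>
    obtain ⟨p, hp⟩ := hTl h
    exact ⟨p, by omega⟩
  | Sum.inl (LBBase.Fl h), _ =>
    obtain ⟨p, hp⟩ := hFl h
    exact ⟨p, by omega⟩
  | Sum.inr ⟨LBEdge.llk i, j⟩, _ =>
    obtain ⟨p1, hp1⟩ := walk_to_end (SA := SA) (SB := SB) (.llk i) trivial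
      (elen P t (.llk i) - 1 - j.val) j rfl
    obtain ⟨p2, hp2⟩ := hlk
    refine ⟨p1.append p2, ?_⟩
    have := j.isLt
    simp only [SimpleGraph.Walk.length_append, hp1, hp2]
    simp only [elen] at *
    omega
  | Sum.inr ⟨LBEdge.lklk1, j⟩, _ =>
    obtain ⟨p, hp⟩ := walk_to_end (SA := SA) (SB := SB) (.lklk1) trivial
      (elen P t (.lklk1 : LBEdge k lk) - 1 - j.val) j rfl
    refine ⟨p, ?_⟩
    have := j.isLt
    simp only [elen] at *
    omega
  | Sum.inr ⟨LBEdge.lk1t h, j⟩, _ =>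
    obtain ⟨p, hp⟩ := walk_from_start (SA := SA) (SB := SB) (.lk1t h) trivial
      j.val j rfl
    refine ⟨p.reverse, ?_⟩
    have := j.isLt
    simp only [SimpleGraph.Walk.length_reverse, hp]
    simp only [elen] at *
    omega
  | Sum.inr ⟨LBEdge.lk1f h, j⟩, _ =>
    obtain ⟨p, hp⟩ := walk_from_start (SA := SA) (SB := SB) (.lk1f h) trivial
      j.val j rfl
    refine ⟨p.reverse, ?_⟩
    have := j.isLt
    simp only [SimpleGraph.Walk.length_reverse, hp]
    simp only [elen] at *
    omega
  | Sum.inr ⟨LBEdge.lenc i h, j⟩, _ =>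
    obtain ⟨p1, hp1⟩ := walk_to_end (SA := SA) (SB := SB) (.lenc i h) trivial
      (elen P t (.lenc i h) - 1 - j.val) j rfl
    have h2 : ∃ p2 : (graph k lk P t SA SB).Walk
        (Sum.inl (ends (.lenc i h : LBEdge k lk)).2) (Sum.inl LBBase.Lk1),
        p2.length = P := by
      simp only [ends]
      cases hb : Nat.testBit i.val h.val
      · simpa using hFl h
      · simpa using hTl h
    obtain ⟨p2, hp2⟩ := h2
    refine ⟨p1.append p2, ?_⟩
    have := j.isLt
    simp only [SimpleGraph.Walk.length_append, hp1, hp2]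
    simp only [elen] at *
    omega

variable (SA SB) in
lemma walk_to_Rk1 (hP : 1 ≤ P) (y : Vtx k lk P t) (hy : rightCore y) :
    ∃ p : (graph k lk P t SA SB).Walk y (Sum.inl LBBase.Rk1), p.length ≤ 2 * P := by
  have hrk : ∃ q : (graph k lk P t SA SB).Walk (Sum.inl (LBBase.Rk : LBBase k lk))
      (Sum.inl LBBase.Rk1), q.length = P := by
    obtain ⟨q, hq⟩ := walk_ends (SA := SA) (SB := SB) (.rkrk1 : LBEdge k lk)
      trivial (by simpa [elen] using hP) (by simp [ends])
    exact ⟨q, hq⟩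
  have hTr : ∀ h : Fin lk, ∃ q : (graph k lk P t SA SB).Walk
      (Sum.inl (LBBase.Tr h)) (Sum.inl LBBase.Rk1), q.length = P := by
    intro h
    obtain ⟨q, hq⟩ := walk_ends (SA := SA) (SB := SB) (.rk1t h)
      trivial (by simpa [elen] using hP) (by simp [ends])
    exact ⟨q.reverse, by simp only [SimpleGraph.Walk.length_reverse, hq]; simp only [elen]⟩
  have hFr : ∀ h : Fin lk, ∃ q : (graph k lk P t SA SB).Walk
      (Sum.inl (LBBase.Fr h)) (Sum.inl LBBase.Rk1), q.length = P := by
    intro h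
    obtain ⟨q, hq⟩ := walk_ends (SA := SA) (SB := SB) (.rk1f h)
      trivial (by simpa [elen] using hP) (by simp [ends])
    exact ⟨q.reverse, by simp only [SimpleGraph.Walk.length_reverse, hq]; simp only [elen]⟩
  match y, hy with
  | Sum.inl (LBBase.R i), _ =>
    obtain ⟨p1, hp1⟩ := walk_ends (SA := SA) (SB := SB) (.rrk i)
      trivial (by simpa [elen] using hP) (by simp [ends])
    obtain ⟨p2, hp2⟩ := hrk
    exact ⟨p1.append p2, by simp only [SimpleGraph.Walk.length_append, hp1, hp2]; simp only [elen]; omega⟩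
  | Sum.inl LBBase.Rk, _ =>
    obtain ⟨p, hp⟩ := hrk
    exact ⟨p, by omega⟩
  | Sum.inl LBBase.Rk1, _ => exact ⟨SimpleGraph.Walk.nil, by simp⟩
  | Sum.inl (LBBase.Tr h), _ =>
    obtain ⟨p, hp⟩ := hTr h
    exact ⟨p, by omega⟩
  | Sum.inl (LBBase.Fr h), _ =>
    obtain ⟨p, hp⟩ := hFr h
    exact ⟨p, by omega⟩
  | Sum.inr ⟨LBEdge.rrk i, j⟩, _ =>
    obtain ⟨p1, hp1⟩ := walk_to_end (SA := SA) (SB := SB) (.rrk i) trivial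
      (elen P t (.rrk i) - 1 - j.val) j rfl
    obtain ⟨p2, hp2⟩ := hrk
    refine ⟨p1.append p2, ?_⟩
    have := j.isLt
    simp only [SimpleGraph.Walk.length_append, hp1, hp2]
    simp only [elen] at *
    omega
  | Sum.inr ⟨LBEdge.rkrk1, j⟩, _ =>
    obtain ⟨p, hp⟩ := walk_to_end (SA := SA) (SB := SB) (.rkrk1) trivial
      (elen P t (.rkrk1 : LBEdge k lk) - 1 - j.val) j rfl
    refine ⟨p, ?_⟩
    have := j.isLt
    simp only [elen] at *
    omega
  | Sum.inr ⟨LBEdge.rk1t h, j⟩, _ =>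
    obtain ⟨p, hp⟩ := walk_from_start (SA := SA) (SB := SB) (.rk1t h) trivial
      j.val j rfl
    refine ⟨p.reverse, ?_⟩
    have := j.isLt
    simp only [SimpleGraph.Walk.length_reverse, hp]
    simp only [elen] at *
    omega
  | Sum.inr ⟨LBEdge.rk1f h, j⟩, _ =>
    obtain ⟨p, hp⟩ := walk_from_start (SA := SA) (SB := SB) (.rk1f h) trivial
      j.val j rfl
    refine ⟨p.reverse, ?_⟩
    have := j.isLt
    simp only [SimpleGraph.Walk.length_reverse, hp]
    simp only [elen] at *
    omega
  | Sum.inr ⟨LBEdge.renc i h, j⟩, _ =>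
    obtain ⟨p1, hp1⟩ := walk_to_end (SA := SA) (SB := SB) (.renc i h) trivial
      (elen P t (.renc i h) - 1 - j.val) j rfl
    have h2 : ∃ p2 : (graph k lk P t SA SB).Walk
        (Sum.inl (ends (.renc i h : LBEdge k lk)).2) (Sum.inl LBBase.Rk1),
        p2.length = P := by
      simp only [ends]
      cases hb : Nat.testBit i.val h.val
      · simpa using hFr h
      · simpa using hTr h
    obtain ⟨p2, hp2⟩ := h2
    refine ⟨p1.append p2, ?_⟩
    have := j.isLt
    simp only [SimpleGraph.Walk.length_append, hp1, hp2]
    simp only [elen] at *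
    omega

end LB

/-- In the lower-bound graph construction, every node in
`L ∪ T ∪ F` or on a `P`-path among the left-side nodes is at distance at most
`2P` from `ℓ_{k+1}`; consequently every two such left-side nodes are at
distance at most `4P` from each other, and every such left-side node is at
distance at most `4P + 2t + 1` from every (core) right-side node. -/
theorem stmt10 (k lk P t : ℕ) (hk : k = 2 ^ lk) (hP : 1 ≤ P) (ht : 1 ≤ t)
    (SA SB : Fin k → Bool) :
    (∀ x : LB.Vtx k lk P t, LB.leftCore x →
      (LB.graph k lk P t SA SB).dist x (Sum.inl LBBase.Lk1) ≤ 2 * P) ∧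
    (∀ x y : LB.Vtx k lk P t, LB.leftCore x → LB.leftCore y →
      (LB.graph k lk P t SA SB).dist x y ≤ 4 * P) ∧
    (∀ x y : LB.Vtx k lk P t, LB.leftCore x → LB.rightCore y →
      (LB.graph k lk P t SA SB).dist x y ≤ 4 * P + 2 * t + 1) := by
  obtain ⟨pc, hpc⟩ := LB.walk_ends (SA := SA) (SB := SB) (.crC : LBEdge k lk)
    trivial (by simp [LB.elen]) (by simp [LB.ends])
  refine ⟨?_, ?_, ?_⟩
  · intro x hx
    obtain ⟨p, hp⟩ := LB.walk_to_Lk1 SA SB hP x hx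
    exact le_trans (SimpleGraph.dist_le p) hp
  · intro x y hx hy
    obtain ⟨p, hp⟩ := LB.walk_to_Lk1 SA SB hP x hx
    obtain ⟨q, hq⟩ := LB.walk_to_Lk1 SA SB hP y hy
    refine le_trans (SimpleGraph.dist_le (p.append q.reverse)) ?_
    simp only [SimpleGraph.Walk.length_append, SimpleGraph.Walk.length_reverse]
    omega
  · intro x y hx hy
    obtain ⟨p, hp⟩ := LB.walk_to_Lk1 SA SB hP x hx
    obtain ⟨q, hq⟩ := LB.walk_to_Rk1 SA SB hP y hy
    obtain ⟨pc, hpc⟩ : ∃ pc' : (LB.graph k lk P t SA SB).Walk (Sum.inl LBBase.Lk1)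
        (Sum.inl LBBase.Rk1), pc'.length = 2 * t + 1 := ⟨pc, by simpa only [LB.elen] using hpc⟩
    refine le_trans (SimpleGraph.dist_le ((p.append pc).append q.reverse)) ?_
    simp only [SimpleGraph.Walk.length_append, SimpleGraph.Walk.length_reverse]
    omega
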